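/- Let A be an associative unital algebra over the complex numbers ℂ, let V be a simple A-module whose underlying ℂ-vector space has countable dimension, and let z be an element of the center of A. Then z acts on V as a complex scalar: there exists λ ∈ ℂ such that z·v = λ·v for all v ∈ V. -/

import Mathlib

open Polynomial Cardinal

/-- A central element of `A` acts as a complex scalar on a simple `A`-module of
countable dimension over `ℂ`. -/
theorem central_element_acts_as_scalar (A : Type*) [Ring A] [Algebra ℂ A]
    (V : Type*) [AddCommGroup V] [Module ℂ V] [Module A V] [IsScalarTower ℂ A V]
    [IsSimpleModule A V] (hV : Module.rank ℂ V ≤ Cardinal.aleph0)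
    (z : A) (hz : z ∈ Subring.center A) :
    ∃ c : ℂ, ∀ v : V, z • v = c • v := by
  classical
  have hzc : ∀ a : A, a * z = z * a := Subring.mem_center_iff.mp hz
  letI : DecidableEq (Module.End A V) := Classical.decEq _
  set D := Module.End A V with hD
  let f : D :=
    { toFun := fun v => z • v
      map_add' := fun v w => smul_add z v w
      map_smul' := fun a v => by
        simp only [RingHom.id_apply]
        rw [← mul_smul, ← hzc a, mul_smul] }
  suffices h : ∃ c : ℂ, f = algebraMap ℂ D c by
    obtain ⟨c, hc⟩ := h
    refine ⟨c, fun v => ?_⟩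
    have := congrFun (congrArg (DFunLike.coe (F := D)) hc) v
    exact this.trans (Module.algebraMap_end_apply ℂ A V c v)
  by_contra hcon
  push_neg at hcon
  have hnz : ∀ a : ℂ, f - algebraMap ℂ D a ≠ 0 := fun a h =>
    hcon a (sub_eq_zero.mp h)
  -- nonzero polynomials evaluated at `f` are nonzero
  have haeval : ∀ p : ℂ[X], p ≠ 0 → aeval f p ≠ 0 := by
    suffices H : ∀ (n : ℕ) (p : ℂ[X]), p.natDegree = n → p ≠ 0 → aeval f p ≠ 0 from
      fun p => H p.natDegree p rfl
    intro n
    induction n using Nat.strong_induction_on with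
    | _ n ih =>
      intro p hn hp
      rcases Nat.eq_zero_or_pos n with h0 | hpos
      · subst h0
        obtain ⟨c, rfl⟩ := Polynomial.natDegree_eq_zero.mp hn
        have hc : c ≠ 0 := fun h => hp (by simp [h])
        simpa [aeval_C] using fun h => hc ((algebraMap ℂ D).injective (by simpa using h))
      · have hdeg : 0 < p.degree :=
          Polynomial.natDegree_pos_iff_degree_pos.mp (by omega)
        obtain ⟨r, hr⟩ := Complex.exists_root hdeg
        obtain ⟨q, rfl⟩ := (Polynomial.dvd_iff_isRoot.mpr hr)
        have hq : q ≠ 0 := fun h => hp (by simp [h])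
        have hXC : (X - C r : ℂ[X]) ≠ 0 := X_sub_C_ne_zero r
        have hdq : q.natDegree < n := by
          have : ((X - C r) * q).natDegree = 1 + q.natDegree := by
            rw [Polynomial.natDegree_mul hXC hq, Polynomial.natDegree_X_sub_C]
          omega
        have := ih q.natDegree hdq q rfl hq
        rw [map_mul]
        have h1 : aeval f (X - C r) = f - algebraMap ℂ D r := by
          simp [map_sub, aeval_X, aeval_C, Algebra.algebraMap_eq_smul_one]
        rw [h1]
        exact mul_ne_zero (hnz r) this
  have : Nontrivial V := IsSimpleModule.nontrivial A V
  obtain ⟨v₀, hv₀⟩ := exists_ne (0 : V)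
  -- the resolvent family is linearly independent over ℂ
  have hli : LinearIndependent ℂ (fun a : ℂ => ((f - algebraMap ℂ D a)⁻¹ : D) v₀) := by
    refine linearIndependent_iff'.2 fun s m hm i hi => ?_
    set P : ℂ → ℂ[X] := fun i => ∏ j ∈ s.erase i, (X - C j) with hP
    set B : ℂ[X] := ∏ j ∈ s, (X - C j) with hBdef
    have hB : ∀ i ∈ s, B = P i * (X - C i) := fun i hi =>
      (Finset.prod_erase_mul s _ hi).symm
    have h1 : ∀ i ∈ s, (aeval f B) (((f - algebraMap ℂ D i)⁻¹ : D) v₀)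
        = (aeval f (P i)) v₀ := by
      intro i hi
      rw [hB i hi, map_mul]
      have h2 : aeval f (X - C i) = f - algebraMap ℂ D i := by
        simp [map_sub, aeval_X, aeval_C]
      rw [h2, Module.End.mul_apply, ← Module.End.mul_apply (f - algebraMap ℂ D i),
        mul_inv_cancel₀ (hnz i), Module.End.one_apply]
    have hm2 := congrArg (fun w => (aeval f B) w) hm
    simp only [map_sum, map_zero] at hm2
    have hm3 : ∑ j ∈ s, m j • ((aeval f (P j)) v₀) = 0 := by
      rw [← hm2]
      refine Finset.sum_congr rfl fun j hj => ?_
      rw [(aeval f B).map_smul_of_tower, h1 j hj]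
    set p : ℂ[X] := ∑ j ∈ s, C (m j) * P j with hpdef
    have hpv : (aeval f p) v₀ = 0 := by
      have hexp : (aeval f p) v₀ = ∑ j ∈ s, m j • ((aeval f (P j)) v₀) := by
        rw [hpdef, map_sum, LinearMap.sum_apply]
        exact Finset.sum_congr rfl fun j hj => by
          rw [map_mul, aeval_C, Module.End.mul_apply, Module.algebraMap_end_apply]
      rw [hexp, hm3]
    have hp0 : p = 0 := by
      by_contra hp
      have hu := haeval p hp
      have h5 : ((aeval f p)⁻¹ * (aeval f p)) v₀ = v₀ := by
        rw [inv_mul_cancel₀ hu]; rfl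
      have : v₀ = 0 := by rw [← h5, Module.End.mul_apply, hpv, map_zero]
      exact hv₀ this
    -- evaluate the zero polynomial at `i`
    have := congrArg (Polynomial.eval i) hp0
    rw [hpdef] at this
    simp only [Polynomial.eval_finset_sum, eval_mul, eval_C, eval_zero, hP,
      Polynomial.eval_prod, eval_sub, eval_X] at this
    rw [← s.sum_erase_add _ hi] at this
    have h2 : ∀ j ∈ s.erase i, m j * ∏ k ∈ s.erase j, (i - k) = 0 := by
      intro j hj
      have hmem : i ∈ s.erase j :=
        Finset.mem_erase_of_ne_of_mem (Finset.ne_of_mem_erase hj).symm hi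
      rw [← (s.erase j).prod_erase_mul _ hmem, sub_self, mul_zero, mul_zero]
    rw [Finset.sum_eq_zero h2, zero_add] at this
    exact eq_zero_of_ne_zero_of_mul_right_eq_zero (Finset.prod_ne_zero_iff.2 fun j hj =>
      sub_ne_zero.2 (Finset.ne_of_mem_erase hj).symm) this
  -- cardinality contradiction
  have hcard := hli.cardinal_lift_le_rank
  have : (Cardinal.continuum : Cardinal) ≤ Cardinal.aleph0 := by
    have h1 : Cardinal.lift.{_} (#ℂ) ≤ Cardinal.lift.{_} (Module.rank ℂ V) := hcard
    have h2 : Cardinal.lift (Module.rank ℂ V) ≤ Cardinal.lift (Cardinal.aleph0 : Cardinal) :=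
      Cardinal.lift_le.mpr hV
    have := h1.trans h2
    rw [mk_complex] at this
    simpa using this
  exact absurd this (not_le.mpr Cardinal.aleph0_lt_continuum)
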